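/- Let Σ be a positive-definite real n×n matrix and let Σ̄ = Matrix.diagonal (fun i => Σ i i) be the diagonal matrix formed from its diagonal entries. Then the Kullback–Leibler divergence between the centered multivariate Gaussians N(0, Σ) and N(0, Σ̄) equals (1/2) * ((∑ i, Real.log (Σ i i)) − Real.log Σ.det). In particular (Σ̄⁻¹ * Σ).trace = n and KL(N(0,Σ) ‖ N(0,Σ̄)) = (1/2)(log det Σ̄ − log det Σ). -/

import Mathlib

open MeasureTheory
open scoped BigOperators Matrix

/-- The centered multivariate Gaussian measure `N(0, S)` on `Fin n → ℝ` with
positive-definite covariance matrix `S`, defined by its density with respect to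
the Lebesgue measure. -/
noncomputable def multivariateGaussian {n : ℕ} (S : Matrix (Fin n) (Fin n) ℝ) :
    Measure (Fin n → ℝ) :=
  volume.withDensity fun x =>
    ENNReal.ofReal (Real.sqrt (((2 * Real.pi) ^ n * S.det)⁻¹) *
      Real.exp (-(1 / 2) * (x ⬝ᵥ (S⁻¹ *ᵥ x))))

/-- The Kullback–Leibler divergence `KL(μ ‖ ν) = ∫ log (dμ/dν) dμ`. -/
noncomputable def klDiv {α : Type*} [MeasurableSpace α] (μ ν : Measure α) : ℝ :=
  ∫ x, MeasureTheory.llr μ ν x ∂μ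


open MeasureTheory Real Filter

lemma integrable1d_exp : Integrable fun x : ℝ => Real.exp (-(1/2) * x ^ 2) := by
  simpa using integrable_exp_neg_mul_sq (by norm_num : (0:ℝ) < 1/2)

lemma integrable1d_x_exp : Integrable fun x : ℝ => x * Real.exp (-(1/2) * x ^ 2) := by
  simpa using integrable_mul_exp_neg_mul_sq (by norm_num : (0:ℝ) < 1/2)

lemma integrable1d_x2_exp : Integrable fun x : ℝ => x ^ 2 * Real.exp (-(1/2) * x ^ 2) := by
  have h := integrable_rpow_mul_exp_neg_mul_sq (by norm_num : (0:ℝ) < 1/2)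
    (by norm_num : (-1:ℝ) < 2)
  refine h.congr (Eventually.of_forall fun x => ?_)
  norm_num

lemma int1d_exp : ∫ x : ℝ, Real.exp (-(1/2) * x ^ 2) = Real.sqrt (2 * Real.pi) := by
  have h := integral_gaussian (1/2 : ℝ)
  rw [show (Real.pi / (1/2 : ℝ)) = 2 * Real.pi by ring] at h
  simpa using h

lemma int1d_x_exp : ∫ x : ℝ, x * Real.exp (-(1/2) * x ^ 2) = 0 := by
  have hder : ∀ x : ℝ, HasDerivAt (fun x : ℝ => -Real.exp (-(1/2) * x ^ 2))
      (x * Real.exp (-(1/2) * x ^ 2)) x := by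
    intro x
    have h := (((hasDerivAt_pow 2 x).const_mul ((-(1/2)) : ℝ)).exp).neg
    refine h.congr_deriv ?_
    norm_num
    ring
  exact integral_eq_zero_of_hasDerivAt_of_integrable hder integrable1d_x_exp integrable1d_exp.neg

lemma int1d_x2_exp : ∫ x : ℝ, x ^ 2 * Real.exp (-(1/2) * x ^ 2) = Real.sqrt (2 * Real.pi) := by
  have hder : ∀ x : ℝ, HasDerivAt (fun x : ℝ => -x * Real.exp (-(1/2) * x ^ 2))
      (x ^ 2 * Real.exp (-(1/2) * x ^ 2) - Real.exp (-(1/2) * x ^ 2)) x := by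
    intro x
    have hg := ((hasDerivAt_pow 2 x).const_mul ((-(1/2)) : ℝ)).exp
    have hf := (hasDerivAt_id x).neg
    refine (hf.mul hg).congr_deriv ?_
    norm_num
    ring
  have h0 : ∫ x : ℝ, (x ^ 2 * Real.exp (-(1/2) * x ^ 2) - Real.exp (-(1/2) * x ^ 2)) = 0 := by
    refine integral_eq_zero_of_hasDerivAt_of_integrable hder
      (integrable1d_x2_exp.sub integrable1d_exp) ?_
    exact integrable1d_x_exp.neg.congr (Filter.Eventually.of_forall fun x => by simp [neg_mul])
  rw [integral_sub integrable1d_x2_exp integrable1d_exp, sub_eq_zero] at h0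
  rw [h0, int1d_exp]

lemma prod_moment {n : ℕ} (k l : Fin n) :
    Integrable (fun y : Fin n → ℝ => (y k * y l) * ∏ i, Real.exp (-(1/2) * (y i) ^ 2)) ∧
    ∫ y : Fin n → ℝ, (y k * y l) * ∏ i, Real.exp (-(1/2) * (y i) ^ 2)
      = (if k = l then 1 else 0) * Real.sqrt (2 * Real.pi) ^ n := by
  classical
  set f : Fin n → ℝ → ℝ := fun i t =>
    (if k = i then t else 1) * ((if l = i then t else 1) * Real.exp (-(1/2) * t ^ 2)) with hf
  have hfe : (fun y : Fin n → ℝ => (y k * y l) * ∏ i, Real.exp (-(1/2) * (y i) ^ 2))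
      = fun y => ∏ i, f i (y i) := by
    funext y
    simp only [hf, Finset.prod_mul_distrib, Finset.prod_ite_eq, Finset.mem_univ, if_pos]
    ring
  have hfint : ∀ i, Integrable (f i) := by
    intro i
    rcases eq_or_ne k i with hk | hk <;> rcases eq_or_ne l i with hl | hl
    · have h : f i = fun t => t * (t * Real.exp (-(1/2) * t ^ 2)) := by
        funext t; rw [hf]; simp only; rw [if_pos hk, if_pos hl]
      rw [h]
      exact integrable1d_x2_exp.congr (Filter.Eventually.of_forall fun t => by ring)
    · have h : f i = fun t => t * (1 * Real.exp (-(1/2) * t ^ 2)) := by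
        funext t; rw [hf]; simp only; rw [if_pos hk, if_neg hl]
      rw [h]
      exact integrable1d_x_exp.congr (Filter.Eventually.of_forall fun t => by ring)
    · have h : f i = fun t => 1 * (t * Real.exp (-(1/2) * t ^ 2)) := by
        funext t; rw [hf]; simp only; rw [if_neg hk, if_pos hl]
      rw [h]
      exact integrable1d_x_exp.congr (Filter.Eventually.of_forall fun t => by ring)
    · have h : f i = fun t => 1 * (1 * Real.exp (-(1/2) * t ^ 2)) := by
        funext t; rw [hf]; simp only; rw [if_neg hk, if_neg hl]
      rw [h]
      exact integrable1d_exp.congr (Filter.Eventually.of_forall fun t => by ring)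
  constructor
  · rw [hfe]; exact Integrable.fintype_prod hfint
  · rw [hfe, MeasureTheory.integral_fintype_prod_volume_eq_prod]
    by_cases hkl : k = l
    · subst hkl
      rw [if_pos rfl, one_mul]
      have hval : ∀ i : Fin n, ∫ t : ℝ, f i t = Real.sqrt (2 * Real.pi) := by
        intro i
        rcases eq_or_ne k i with hk | hk
        · have h : f i = fun t => t ^ 2 * Real.exp (-(1/2) * t ^ 2) := by
            funext t; rw [hf]; simp only
            split_ifs with h1 <;> first | ring1 | exact absurd hk h1
          rw [h]; exact int1d_x2_exp
        · have h : f i = fun t => Real.exp (-(1/2) * t ^ 2) := by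
            funext t; rw [hf]; simp only
            split_ifs with h1 <;> first | ring1 | exact absurd h1 hk
          rw [h]; exact int1d_exp
      rw [Finset.prod_congr rfl fun i _ => hval i, Finset.prod_const, Finset.card_univ,
        Fintype.card_fin]
    · rw [if_neg hkl, zero_mul]
      refine Finset.prod_eq_zero (Finset.mem_univ k) ?_
      have h : f k = fun t => t * Real.exp (-(1/2) * t ^ 2) := by
        funext t; rw [hf]; simp only
        split_ifs with h1 h2 <;>
          first | ring1 | exact absurd h2.symm hkl | exact absurd trivial h1
      rw [h, int1d_x_exp]

open Matrix in
lemma cont_quad {n : ℕ} (M : Matrix (Fin n) (Fin n) ℝ) :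
    Continuous fun x : Fin n → ℝ => x ⬝ᵥ (M *ᵥ x) := by
  simp only [dotProduct, Matrix.mulVec]
  exact continuous_finset_sum _ fun i _ =>
    (continuous_apply i).mul (continuous_finset_sum _ fun j _ =>
      continuous_const.mul (continuous_apply j))

open Matrix in
lemma cov_integral {n : ℕ} {L : Matrix (Fin n) (Fin n) ℝ} (hd : L.det ≠ 0)
    {g : (Fin n → ℝ) → ℝ} (hg : Continuous g) :
    ∫ x, g x = |L.det| * ∫ y, g (L *ᵥ y) := by
  have hT : Measurable (Matrix.toLin' L) :=
    (Matrix.toLin' L).continuous_of_finiteDimensional.measurable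
  have hmap := Real.map_matrix_volume_pi_eq_smul_volume_pi hd
  rw [abs_inv] at hmap
  have h1 : ∫ y, g (L *ᵥ y) = ∫ x, g x ∂(Measure.map (Matrix.toLin' L) volume) := by
    rw [integral_map hT.aemeasurable hg.aestronglyMeasurable]
    simp_rw [Matrix.toLin'_apply]
  have habs : |L.det| ≠ 0 := abs_ne_zero.mpr hd
  rw [h1, hmap, integral_smul_measure,
    ENNReal.toReal_ofReal (inv_nonneg.mpr (abs_nonneg _)), smul_eq_mul, ← mul_assoc,
    mul_inv_cancel₀ habs, one_mul]

open Matrix in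
lemma cov_integrable {n : ℕ} {L : Matrix (Fin n) (Fin n) ℝ} (hd : L.det ≠ 0)
    {g : (Fin n → ℝ) → ℝ} (hg : Continuous g) :
    Integrable g (volume : Measure (Fin n → ℝ)) ↔
      Integrable (fun y => g (L *ᵥ y)) (volume : Measure (Fin n → ℝ)) := by
  have hT : Measurable (Matrix.toLin' L) :=
    (Matrix.toLin' L).continuous_of_finiteDimensional.measurable
  have hmap := Real.map_matrix_volume_pi_eq_smul_volume_pi hd
  rw [abs_inv] at hmap
  have h0 : (0:ℝ) < |L.det|⁻¹ := inv_pos.mpr (abs_pos.mpr hd)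
  have h := integrable_map_measure (μ := (volume : Measure (Fin n → ℝ)))
    hg.aestronglyMeasurable hT.aemeasurable
  rw [hmap, integrable_smul_measure (by simp [ENNReal.ofReal_eq_zero, not_le, h0, hd]) ENNReal.ofReal_ne_top] at h
  simpa [Function.comp_def, Matrix.toLin'_apply] using h

open scoped MatrixOrder in
open Matrix in
lemma gaussian_key {n : ℕ} (S : Matrix (Fin n) (Fin n) ℝ) (hS : S.PosDef)
    (A : Matrix (Fin n) (Fin n) ℝ) :
    IsProbabilityMeasure (multivariateGaussian S) ∧
    Integrable (fun x : Fin n → ℝ => x ⬝ᵥ (A *ᵥ x)) (multivariateGaussian S) ∧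
    ∫ x, x ⬝ᵥ (A *ᵥ x) ∂(multivariateGaussian S) = (A * S).trace := by
  classical
  set c : ℝ := Real.sqrt (((2 * Real.pi) ^ n * S.det)⁻¹) with hc
  set ρ : (Fin n → ℝ) → ℝ := fun x => c * Real.exp (-(1 / 2) * (x ⬝ᵥ (S⁻¹ *ᵥ x))) with hρ
  have hμ : multivariateGaussian S = volume.withDensity fun x => ENNReal.ofReal (ρ x) := rfl
  have hdS : 0 < S.det := hS.det_pos
  have hcpos : 0 < c := Real.sqrt_pos.mpr (inv_pos.mpr (mul_pos (by positivity) hdS))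
  have hρpos : ∀ x, 0 < ρ x := fun x => mul_pos hcpos (Real.exp_pos _)
  have hρcont : Continuous ρ :=
    continuous_const.mul (Real.continuous_exp.comp (continuous_const.mul (cont_quad S⁻¹)))
  have hmeas : Measurable fun x => (ρ x).toNNReal := hρcont.measurable.real_toNNReal
  have hofReal : (fun x => ENNReal.ofReal (ρ x)) = fun x => ((ρ x).toNNReal : ENNReal) := rfl
  have hint_mvg : ∀ g : (Fin n → ℝ) → ℝ,
      ∫ x, g x ∂(multivariateGaussian S) = ∫ x, ρ x * g x := by
    intro g
    rw [hμ, hofReal, integral_withDensity_eq_integral_smul hmeas]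
    congr 1; funext x
    simp [NNReal.smul_def, Real.coe_toNNReal _ (hρpos x).le]
  have hintble_mvg : ∀ g : (Fin n → ℝ) → ℝ,
      Integrable g (multivariateGaussian S) ↔ Integrable (fun x => ρ x * g x) volume := by
    intro g
    rw [hμ, hofReal, integrable_withDensity_iff_integrable_smul hmeas]
    exact integrable_congr (Filter.Eventually.of_forall fun x => by
      simp [NNReal.smul_def, Real.coe_toNNReal _ (hρpos x).le])
  -- square root of S
  set L : Matrix (Fin n) (Fin n) ℝ := CFC.sqrt S with hL
  have hLL : L * L = S := CFC.sqrt_mul_sqrt_self S hS.posSemidef.nonneg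
  have hLsym : Lᵀ = L := by
    rw [← Matrix.conjTranspose_eq_transpose_of_trivial]
    exact (CFC.sqrt_nonneg S).posSemidef.1
  have hdet2 : L.det * L.det = S.det := by rw [← Matrix.det_mul, hLL]
  have hd : L.det ≠ 0 := by
    intro h; rw [h, mul_zero] at hdet2; exact hdS.ne' hdet2.symm
  have habs : Real.sqrt S.det = |L.det| := by
    rw [← hdet2, show L.det * L.det = L.det ^ 2 from (sq L.det).symm, Real.sqrt_sq_eq_abs]
  have hu : IsUnit L.det := hd.isUnit
  have hLSL : L * S⁻¹ * L = 1 := by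
    rw [← hLL, Matrix.mul_inv_rev,
      show L * (L⁻¹ * L⁻¹) * L = L * L⁻¹ * (L⁻¹ * L) from by
        rw [Matrix.mul_assoc, Matrix.mul_assoc, Matrix.mul_assoc],
      Matrix.mul_nonsing_inv L hu, Matrix.nonsing_inv_mul L hu, one_mul]
  have hvL : ∀ v : Fin n → ℝ, v ᵥ* L = L *ᵥ v := by
    intro v
    conv_lhs => rw [← hLsym]
    exact Matrix.vecMul_transpose L v
  have hquad : ∀ (M : Matrix (Fin n) (Fin n) ℝ) (y : Fin n → ℝ),
      (L *ᵥ y) ⬝ᵥ (M *ᵥ (L *ᵥ y)) = y ⬝ᵥ ((L * M * L) *ᵥ y) := by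
    intro M y
    rw [Matrix.mulVec_mulVec, dotProduct_comm, Matrix.dotProduct_mulVec, hvL,
      Matrix.mulVec_mulVec, ← Matrix.mul_assoc, dotProduct_comm]
  have hρL : ∀ y : Fin n → ℝ, ρ (L *ᵥ y) = c * ∏ i, Real.exp (-(1/2) * (y i) ^ 2) := by
    intro y
    rw [hρ]; simp only
    congr 1
    rw [hquad S⁻¹ y, hLSL, Matrix.one_mulVec, ← Real.exp_sum]
    congr 1
    simp [dotProduct, Finset.mul_sum, sq]
  have hnorm_y : ∫ y : Fin n → ℝ, ρ (L *ᵥ y) = c * Real.sqrt (2 * Real.pi) ^ n := by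
    simp_rw [hρL]
    rw [MeasureTheory.integral_const_mul,
      MeasureTheory.integral_fintype_prod_volume_eq_prod (f := fun (_ : Fin n) t => Real.exp (-(1/2) * t ^ 2)),
      Finset.prod_congr rfl fun (i : Fin n) _ => int1d_exp, Finset.prod_const, Finset.card_univ,
      Fintype.card_fin]
  have hsqrt_pow : Real.sqrt ((2 * Real.pi) ^ n) = Real.sqrt (2 * Real.pi) ^ n := by
    have h2 : ((2 * Real.pi)) ^ n = (Real.sqrt (2 * Real.pi) ^ n) ^ 2 := by
      rw [← pow_mul, mul_comm n 2, pow_mul, Real.sq_sqrt (by positivity)]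
    rw [h2, Real.sqrt_sq (by positivity)]
  have hKconst : |L.det| * (c * Real.sqrt (2 * Real.pi) ^ n) = 1 := by
    have hs0 : Real.sqrt (2 * Real.pi) ≠ 0 := by positivity
    have habs0 : |L.det| ≠ 0 := abs_ne_zero.mpr hd
    rw [hc, Real.sqrt_inv, Real.sqrt_mul (by positivity), habs, hsqrt_pow]
    field_simp
  have hρint : Integrable ρ (volume : Measure (Fin n → ℝ)) := by
    rw [cov_integrable hd hρcont]
    exact ((MeasureTheory.Integrable.fintype_prod
        (f := fun (_ : Fin n) t => Real.exp (-(1/2) * t ^ 2))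
        fun i => integrable1d_exp).const_mul c).congr
      (Filter.Eventually.of_forall fun y => (hρL y).symm)
  have hprob : IsProbabilityMeasure (multivariateGaussian S) := by
    constructor
    rw [hμ, withDensity_apply _ MeasurableSet.univ, setLIntegral_univ,
      ← ofReal_integral_eq_lintegral_ofReal hρint (Filter.Eventually.of_forall fun x => (hρpos x).le),
      cov_integral hd hρcont, hnorm_y, hKconst, ENNReal.ofReal_one]
  set B : Matrix (Fin n) (Fin n) ℝ := L * A * L with hB
  have hExpand : ∀ y : Fin n → ℝ, (y ⬝ᵥ (B *ᵥ y)) * (∏ i, Real.exp (-(1/2) * (y i) ^ 2))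
      = ∑ k, ∑ l, B k l * ((y k * y l) * ∏ i, Real.exp (-(1/2) * (y i) ^ 2)) := by
    intro y
    simp only [dotProduct, Matrix.mulVec, Finset.sum_mul]
    refine Finset.sum_congr rfl fun k _ => ?_
    rw [Finset.mul_sum, Finset.sum_mul]
    exact Finset.sum_congr rfl fun l _ => by ring
  have hpt : ∀ y : Fin n → ℝ, ρ (L *ᵥ y) * ((L *ᵥ y) ⬝ᵥ (A *ᵥ (L *ᵥ y)))
      = ∑ k, ∑ l, (c * B k l) * ((y k * y l) * ∏ i, Real.exp (-(1/2) * (y i) ^ 2)) := by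
    intro y
    rw [hρL y, hquad A y,
      show c * (∏ i, Real.exp (-(1/2) * (y i) ^ 2)) * (y ⬝ᵥ (B *ᵥ y))
        = c * ((y ⬝ᵥ (B *ᵥ y)) * ∏ i, Real.exp (-(1/2) * (y i) ^ 2)) from by ring,
      hExpand y, Finset.mul_sum]
    exact Finset.sum_congr rfl fun k _ => by
      rw [Finset.mul_sum]; exact Finset.sum_congr rfl fun l _ => by ring
  have hterm_int : ∀ k l : Fin n, Integrable (fun y : Fin n → ℝ =>
      (c * B k l) * ((y k * y l) * ∏ i, Real.exp (-(1/2) * (y i) ^ 2))) volume :=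
    fun k l => (prod_moment k l).1.const_mul _
  have hint_quad_vol : Integrable
      (fun y : Fin n → ℝ => ρ (L *ᵥ y) * ((L *ᵥ y) ⬝ᵥ (A *ᵥ (L *ᵥ y)))) volume := by
    refine (integrable_finset_sum _ fun k _ => integrable_finset_sum _ fun l _ =>
      hterm_int k l).congr (Filter.Eventually.of_forall fun y => (hpt y).symm)
  have hIq : Integrable (fun x : Fin n → ℝ => x ⬝ᵥ (A *ᵥ x)) (multivariateGaussian S) := by
    rw [hintble_mvg, cov_integrable (g := fun x => ρ x * (x ⬝ᵥ (A *ᵥ x))) hd (hρcont.mul (cont_quad A))]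
    exact hint_quad_vol
  refine ⟨hprob, hIq, ?_⟩
  rw [hint_mvg, cov_integral (g := fun x => ρ x * (x ⬝ᵥ (A *ᵥ x))) hd (hρcont.mul (cont_quad A))]
  have h1 : ∫ y : Fin n → ℝ, ρ (L *ᵥ y) * ((L *ᵥ y) ⬝ᵥ (A *ᵥ (L *ᵥ y)))
      = ∑ k, ∑ l, (c * B k l) * ((if k = l then (1:ℝ) else 0) * Real.sqrt (2 * Real.pi) ^ n) := by
    rw [integral_congr_ae (Filter.Eventually.of_forall hpt),
      integral_finset_sum _ fun k _ => integrable_finset_sum _ fun l _ => hterm_int k l]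
    refine Finset.sum_congr rfl fun k _ => ?_
    rw [integral_finset_sum _ fun l _ => hterm_int k l]
    refine Finset.sum_congr rfl fun l _ => ?_
    rw [MeasureTheory.integral_const_mul, (prod_moment k l).2]
  have h2 : ∑ k, ∑ l, (c * B k l) * ((if k = l then (1:ℝ) else 0) * Real.sqrt (2 * Real.pi) ^ n)
      = c * Real.sqrt (2 * Real.pi) ^ n * B.trace := by
    rw [Matrix.trace, Finset.mul_sum]
    refine Finset.sum_congr rfl fun k _ => ?_
    rw [Finset.sum_eq_single k (fun l _ hl => by rw [if_neg (fun h : k = l => hl h.symm)]; ring)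
      (fun h => absurd (Finset.mem_univ k) h)]
    rw [if_pos rfl]
    simp [Matrix.diag]
    ring
  have h3 : B.trace = (A * S).trace := by
    rw [hB, Matrix.trace_mul_cycle, hLL, Matrix.trace_mul_comm]
  rw [h1, h2, ← mul_assoc, hKconst, one_mul, h3]

/-- **Gaussian total correlation as a KL divergence.** Let `S` be positive definite
and `Sbar = diagonal (fun i => S i i)` the diagonal matrix of its diagonal entries.
Then `KL(N(0,S) ‖ N(0,Sbar)) = (1/2)(∑ i, log (S i i) - log det S)`; in particular
`tr (Sbar⁻¹ * S) = n` and `KL(N(0,S) ‖ N(0,Sbar)) = (1/2)(log det Sbar - log det S)`. -/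
theorem klDiv_gaussian_diagonal_eq_tc {n : ℕ}
    (S : Matrix (Fin n) (Fin n) ℝ) (hS : S.PosDef)
    (Sbar : Matrix (Fin n) (Fin n) ℝ)
    (hSbar : Sbar = Matrix.diagonal (fun i => S i i)) :
    klDiv (multivariateGaussian S) (multivariateGaussian Sbar)
      = (1 / 2 : ℝ) * ((∑ i, Real.log (S i i)) - Real.log S.det)
    ∧ (Sbar⁻¹ * S).trace = (n : ℝ)
    ∧ klDiv (multivariateGaussian S) (multivariateGaussian Sbar)
        = (1 / 2 : ℝ) * (Real.log Sbar.det - Real.log S.det) := by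
  classical
  have hdiag : ∀ i, 0 < S i i := by
    intro i
    have hne : (Pi.single i (1:ℝ) : Fin n → ℝ) ≠ 0 := by
      intro h
      have h2 := congrFun h i
      simp at h2
    have h := hS.dotProduct_mulVec_pos hne
    simpa [dotProduct, Matrix.mulVec, Pi.single_apply, mul_ite, ite_mul,
      Finset.sum_ite_eq, Finset.sum_ite_eq'] using h
  have hSbar_pd : Sbar.PosDef := by
    rw [hSbar]; exact Matrix.posDef_diagonal_iff.mpr hdiag
  obtain ⟨hprobS, hIq1, hInt1⟩ := gaussian_key S hS S⁻¹
  obtain ⟨-, hIq2, hInt2⟩ := gaussian_key S hS Sbar⁻¹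
  obtain ⟨hprobB, -, -⟩ := gaussian_key Sbar hSbar_pd 1
  haveI := hprobS
  haveI := hprobB
  have htr1 : (S⁻¹ * S).trace = (n:ℝ) := by
    rw [Matrix.nonsing_inv_mul S hS.det_pos.ne'.isUnit, Matrix.trace_one]
    simp
  have hSbar_inv : Sbar⁻¹ = Matrix.diagonal fun i => (S i i)⁻¹ := by
    apply Matrix.inv_eq_right_inv
    rw [hSbar, Matrix.diagonal_mul_diagonal,
      show (fun i => S i i * (S i i)⁻¹) = fun _ => (1:ℝ) from
        funext fun i => mul_inv_cancel₀ (hdiag i).ne', Matrix.diagonal_one]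
  have htr2 : (Sbar⁻¹ * S).trace = (n:ℝ) := by
    rw [hSbar_inv, Matrix.trace]
    have hdg : ∀ i : Fin n, (Matrix.diagonal (fun j => (S j j)⁻¹) * S).diag i = 1 := by
      intro i
      simp [Matrix.diag, Matrix.diagonal_mul, inv_mul_cancel₀ (hdiag i).ne']
    rw [Finset.sum_congr rfl fun i _ => hdg i]
    simp
  set cS : ℝ := Real.sqrt (((2*Real.pi)^n * S.det)⁻¹) with hcS
  set cB : ℝ := Real.sqrt (((2*Real.pi)^n * Sbar.det)⁻¹) with hcB
  set ρS : (Fin n → ℝ) → ℝ := fun x => cS * Real.exp (-(1/2) * (x ⬝ᵥ (S⁻¹ *ᵥ x))) with hρS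
  set ρB : (Fin n → ℝ) → ℝ := fun x => cB * Real.exp (-(1/2) * (x ⬝ᵥ (Sbar⁻¹ *ᵥ x))) with hρB
  have hcSpos : 0 < cS := Real.sqrt_pos.mpr (inv_pos.mpr (mul_pos (by positivity) hS.det_pos))
  have hcBpos : 0 < cB := Real.sqrt_pos.mpr (inv_pos.mpr (mul_pos (by positivity) hSbar_pd.det_pos))
  have hρSpos : ∀ x, 0 < ρS x := fun x => mul_pos hcSpos (Real.exp_pos _)
  have hρBpos : ∀ x, 0 < ρB x := fun x => mul_pos hcBpos (Real.exp_pos _)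
  have hρScont : Continuous ρS :=
    continuous_const.mul (Real.continuous_exp.comp (continuous_const.mul (cont_quad S⁻¹)))
  have hρBcont : Continuous ρB :=
    continuous_const.mul (Real.continuous_exp.comp (continuous_const.mul (cont_quad Sbar⁻¹)))
  have hμ : multivariateGaussian S = volume.withDensity (fun x => ENNReal.ofReal (ρS x)) := rfl
  have hν : multivariateGaussian Sbar = volume.withDensity (fun x => ENNReal.ofReal (ρB x)) := rfl
  set h : (Fin n → ℝ) → ENNReal := fun x => ENNReal.ofReal (ρS x / ρB x) with hh
  have hhmeas : Measurable h :=
    ((hρScont.div hρBcont fun x => (hρBpos x).ne').measurable).ennreal_ofReal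
  have hBmeas : Measurable fun x => ENNReal.ofReal (ρB x) := hρBcont.measurable.ennreal_ofReal
  have key : (multivariateGaussian Sbar).withDensity h = multivariateGaussian S := by
    rw [hν, hμ, ← withDensity_mul _ hBmeas hhmeas]
    congr 1
    funext x
    rw [Pi.mul_apply, hh]
    rw [← ENNReal.ofReal_mul (hρBpos x).le]
    congr 1
    exact mul_div_cancel₀ _ (hρBpos x).ne'
  have hrn : (multivariateGaussian S).rnDeriv (multivariateGaussian Sbar)
      =ᵐ[multivariateGaussian Sbar] h := by
    rw [← key]
    exact Measure.rnDeriv_withDensity _ hhmeas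
  have hac : multivariateGaussian S ≪ multivariateGaussian Sbar := by
    rw [← key]
    exact withDensity_absolutelyContinuous _ _
  have hrnμ : (multivariateGaussian S).rnDeriv (multivariateGaussian Sbar)
      =ᵐ[multivariateGaussian S] h := hrn.filter_mono hac.ae_le
  have hllr : llr (multivariateGaussian S) (multivariateGaussian Sbar)
      =ᵐ[multivariateGaussian S] fun x => (Real.log cS - Real.log cB) +
        ((-(1/2)) * (x ⬝ᵥ (S⁻¹ *ᵥ x)) + (1/2 : ℝ) * (x ⬝ᵥ (Sbar⁻¹ *ᵥ x))) := by
    filter_upwards [hrnμ] with x hx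
    rw [llr_def]
    simp only
    rw [hx, hh]
    rw [ENNReal.toReal_ofReal (div_nonneg (hρSpos x).le (hρBpos x).le),
      Real.log_div (hρSpos x).ne' (hρBpos x).ne', hρS, hρB]
    simp only
    rw [Real.log_mul hcSpos.ne' (Real.exp_pos _).ne',
      Real.log_mul hcBpos.ne' (Real.exp_pos _).ne', Real.log_exp, Real.log_exp]
    ring
  have hKL : klDiv (multivariateGaussian S) (multivariateGaussian Sbar)
      = Real.log cS - Real.log cB := by
    rw [klDiv, integral_congr_ae hllr]
    have hint1' : Integrable (fun x : Fin n → ℝ => (-(1/2 : ℝ)) * (x ⬝ᵥ (S⁻¹ *ᵥ x)))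
      (multivariateGaussian S) := hIq1.const_mul _
    have hint2' : Integrable (fun x : Fin n → ℝ => (1/2 : ℝ) * (x ⬝ᵥ (Sbar⁻¹ *ᵥ x)))
      (multivariateGaussian S) := hIq2.const_mul _
    have hsum : Integrable (fun x : Fin n → ℝ => (-(1/2 : ℝ)) * (x ⬝ᵥ (S⁻¹ *ᵥ x))
        + (1/2 : ℝ) * (x ⬝ᵥ (Sbar⁻¹ *ᵥ x))) (multivariateGaussian S) := hint1'.add hint2'
    rw [integral_add (integrable_const _) hsum, integral_add hint1' hint2',
      integral_const, MeasureTheory.integral_const_mul, MeasureTheory.integral_const_mul,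
      hInt1, hInt2, htr1, htr2]
    simp [measure_univ]
  have hlogc : ∀ (M : Matrix (Fin n) (Fin n) ℝ), 0 < M.det →
      Real.log (Real.sqrt (((2*Real.pi)^n * M.det)⁻¹))
        = -(1/2 : ℝ) * ((n:ℝ) * Real.log (2*Real.pi) + Real.log M.det) := by
    intro M hM
    rw [Real.log_sqrt (by positivity), Real.log_inv,
      Real.log_mul (by positivity) hM.ne', Real.log_pow]
    ring
  have hdetSbar : Sbar.det = ∏ i, S i i := by rw [hSbar, Matrix.det_diagonal]
  have hlogSbar : Real.log Sbar.det = ∑ i, Real.log (S i i) := by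
    rw [hdetSbar, Real.log_prod fun i _ => (hdiag i).ne']
  have hfinal : klDiv (multivariateGaussian S) (multivariateGaussian Sbar)
      = (1 / 2 : ℝ) * (Real.log Sbar.det - Real.log S.det) := by
    rw [hKL, hcS, hcB, hlogc S hS.det_pos, hlogc Sbar hSbar_pd.det_pos]
    ring
  exact ⟨by rw [hfinal, hlogSbar], htr2, hfinal⟩
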